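/- The Hilbert flying saucer X (with its induced length metric) admits no geodesic ray from the origin: there is no path γ : [0,∞) → X with γ(0) = 0 that is an isometric embedding with respect to the length metric of X. Hence the ideal boundary of X is empty. -/

import Mathlib

/-- `ℓ²`, the Hilbert space of square-summable real sequences. -/
noncomputable abbrev ell2 : Type := lp (fun _ : ℕ => ℝ) 2

/-- The disk `Y_i` (here indexed from `0`, so `saucerY i` is the paper's `Y_{i+1}`):
elements of norm at most `i+1` whose first `i` coordinates vanish. -/
def saucerY (i : ℕ) : Set ell2 :=
  {x : ell2 | ‖x‖ ≤ (i : ℝ) + 1 ∧ ∀ j < i, x j = 0}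

/-- The Hilbert flying saucer `X = ⋃ᵢ Yᵢ ⊆ ℓ²`. -/
def saucer : Set ell2 := ⋃ i : ℕ, saucerY i

/-- The induced length (inner) metric on a subset `X` of a normed space: the infimum of
lengths (total variations) of continuous paths in `X` joining `u` to `v`. -/
noncomputable def lengthDist {E : Type*} [NormedAddCommGroup E] [NormedSpace ℝ E]
    (X : Set E) (u v : E) : ENNReal :=
  ⨅ (γ : ℝ → E) (_ : ContinuousOn γ (Set.Icc 0 1)) (_ : γ 0 = u) (_ : γ 1 = v)
    (_ : Set.MapsTo γ (Set.Icc 0 1) X), eVariationOn γ (Set.Icc 0 1)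

open Set RealInnerProductSpace

lemma lengthDist_ge {E : Type*} [NormedAddCommGroup E] [NormedSpace ℝ E]
    (X : Set E) (u v : E) : ENNReal.ofReal ‖u - v‖ ≤ lengthDist X u v := by
  refine le_iInf fun γ => le_iInf fun hc => le_iInf fun h0 => le_iInf fun h1 =>
    le_iInf fun _ => ?_
  have := eVariationOn.edist_le γ (s := Set.Icc (0:ℝ) 1)
    (x := 0) (y := 1) (by simp) (by simp)
  rw [h0, h1] at this
  simpa [edist_dist, dist_eq_norm] using this

lemma lengthDist_le_norm (x : ell2) (hx : x ∈ saucer) :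
    lengthDist saucer 0 x ≤ ENNReal.ofReal ‖x‖ := by
  have hlip : LipschitzWith ‖x‖₊ (fun r : ℝ => r • x) := by
    apply LipschitzWith.of_dist_le_mul
    intro a b
    rw [dist_eq_norm, ← sub_smul, norm_smul, Real.norm_eq_abs, ← Real.dist_eq, dist_comm]
    ring_nf
    exact le_rfl
  have hvar : eVariationOn (fun r : ℝ => r • x) (Set.Icc 0 1) ≤ ENNReal.ofReal ‖x‖ := by
    have h1 : eVariationOn ((fun r : ℝ => r • x) ∘ id) (Set.Icc 0 1)
        ≤ ‖x‖₊ * eVariationOn (id : ℝ → ℝ) (Set.Icc 0 1) :=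
      (hlip.lipschitzOnWith (s := Set.univ)).comp_eVariationOn_le (mapsTo_univ _ _)
    have h2 : eVariationOn (id : ℝ → ℝ) (Set.Icc 0 1) ≤ ENNReal.ofReal 1 := by
      have := MonotoneOn.eVariationOn_le (f := (id : ℝ → ℝ)) (s := Set.Icc (0:ℝ) 1)
        (fun a _ b _ h => h) (a := 0) (b := 1) (by simp) (by simp)
      simpa using this
    calc eVariationOn (fun r : ℝ => r • x) (Set.Icc 0 1)
        ≤ ‖x‖₊ * eVariationOn (id : ℝ → ℝ) (Set.Icc 0 1) := h1
      _ ≤ ‖x‖₊ * ENNReal.ofReal 1 := by gcongr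
      _ = ENNReal.ofReal ‖x‖ := by
          simp [ENNReal.ofReal, mul_one]
  refine iInf_le_of_le (fun r => r • x) (iInf_le_of_le hlip.continuous.continuousOn
    (iInf_le_of_le (by simp) (iInf_le_of_le (by simp) (iInf_le_of_le ?_ hvar))))
  intro r hr
  obtain ⟨_, ⟨i, rfl⟩, hxi⟩ := hx
  refine Set.mem_iUnion.2 ⟨i, ?_, ?_⟩
  · rw [norm_smul, Real.norm_eq_abs, abs_of_nonneg hr.1]
    calc r * ‖x‖ ≤ 1 * ‖x‖ := by gcongr; exact hr.2
      _ ≤ (i:ℝ) + 1 := by rw [one_mul]; exact hxi.1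
  · intro j hj
    have := hxi.2 j hj
    simp [lp.coeFn_smul, this]

/-- The Hilbert flying saucer admits no geodesic ray from the origin: there is no
`γ : [0,∞) → X` with `γ 0 = 0` which is an isometric embedding for the induced length
metric. Hence the ideal boundary of `X` is empty. -/
theorem stmt_12 :
    ¬∃ γ : ℝ → ell2,
      (∀ t : ℝ, 0 ≤ t → γ t ∈ saucer) ∧ γ 0 = 0 ∧
      ∀ s t : ℝ, 0 ≤ s → 0 ≤ t →
        lengthDist saucer (γ s) (γ t) = ENNReal.ofReal |s - t| := by
  rintro ⟨γ, hmem, h0, hiso⟩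
  -- norm of γ t equals t
  have hnorm : ∀ t : ℝ, 0 ≤ t → ‖γ t‖ = t := by
    intro t ht
    have hub : ‖γ t‖ ≤ t := by
      have := lengthDist_ge saucer (γ 0) (γ t)
      rw [hiso 0 t le_rfl ht] at this
      rw [h0, zero_sub, norm_neg] at this
      have := (ENNReal.ofReal_le_ofReal_iff (by positivity)).1 this
      simpa [abs_of_nonneg ht] using this
    have hlb : t ≤ ‖γ t‖ := by
      have h1 := lengthDist_le_norm (γ t) (hmem t ht)
      rw [← h0, hiso 0 t le_rfl ht] at h1
      have := (ENNReal.ofReal_le_ofReal_iff (norm_nonneg _)).1 h1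
      simpa [abs_of_nonneg ht] using this
    linarith
  -- distances bounded by |s - t|
  have hdist : ∀ s t : ℝ, 0 ≤ s → 0 ≤ t → ‖γ s - γ t‖ ≤ |s - t| := by
    intro s t hs ht
    have := lengthDist_ge saucer (γ s) (γ t)
    rw [hiso s t hs ht] at this
    exact (ENNReal.ofReal_le_ofReal_iff (abs_nonneg _)).1 this
  -- γ t = t • γ 1 for t ≥ 1
  have hray : ∀ t : ℝ, 1 ≤ t → γ t = t • γ 1 := by
    intro t ht
    have h1 : ‖γ 1‖ = 1 := hnorm 1 zero_le_one
    have htn : ‖γ t‖ = t := hnorm t (by linarith)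
    have hd : ‖γ 1 - γ t‖ ≤ t - 1 := by
      have := hdist 1 t zero_le_one (by linarith)
      rwa [abs_of_nonpos (by linarith), neg_sub] at this
    have hinner : (inner ℝ (γ 1) (γ t) : ℝ) = ‖γ 1‖ * ‖γ t‖ := by
      have hsq : ‖γ 1 - γ t‖ ^ 2 ≤ (t - 1) ^ 2 := by
        apply sq_le_sq' <;> [linarith [norm_nonneg (γ 1 - γ t)]; exact hd]
      rw [@norm_sub_sq_real, h1, htn] at hsq
      have hcs := real_inner_le_norm (γ 1) (γ t)
      rw [h1, htn] at hcs ⊢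
      nlinarith
    have := inner_eq_norm_mul_iff_real.1 hinner
    rw [h1, htn, one_smul] at this
    exact this.symm
  -- all coordinates of γ 1 vanish
  have hcoord : ∀ j : ℕ, (γ 1 : ∀ _ : ℕ, ℝ) j = 0 := by
    intro j
    set t : ℝ := (j : ℝ) + 3 with htdef
    have ht1 : (1:ℝ) ≤ t := by rw [htdef]; have : (0:ℝ) ≤ (j:ℝ) := Nat.cast_nonneg j; linarith
    have htmem := hmem t (by linarith)
    obtain ⟨_, ⟨i, rfl⟩, hn, hz⟩ := htmem
    have hti : t ≤ (i : ℝ) + 1 := by rw [← hnorm t (by linarith)]; exact hn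
    have hji : j < i := by
      by_contra h
      push_neg at h
      have : (i : ℝ) ≤ j := by exact_mod_cast h
      linarith
    have hz0 : (γ t : ∀ _ : ℕ, ℝ) j = 0 := hz j hji
    rw [hray t ht1, lp.coeFn_smul, Pi.smul_apply, smul_eq_mul] at hz0
    have htne : t ≠ 0 := by positivity
    exact (mul_eq_zero.1 hz0).resolve_left htne
  have hg0 : γ 1 = 0 := lp.ext (funext hcoord)
  have h1 := hnorm 1 zero_le_one
  rw [hg0, norm_zero] at h1
  norm_num at h1
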